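/- Let n ≥ 1 and 0 ≤ p ≤ n be integers, and let d, ξ : {1,…,n} → ℝ. Write a² = ∑_i ξ_i², T = ∑_i d_i ξ_i², and D = ∑_i d_i. Then ∑_{|I|=p} (∑_i sgn_I(i) ξ_i²)(∑_j sgn_I(j) d_j) = (C(n,p) − 4C(n−2,p−1))·a²·D + 4C(n−2,p−1)·T. -/
import Mathlib

/-- Binomial coefficient with the convention `C a b = 0` if `b < 0` or `b > a`. -/
def C (a b : ℤ) : ℤ := if 0 ≤ b ∧ b ≤ a then (a.toNat.choose b.toNat : ℤ) else 0

/-- `sgn_I(j) = 1` if `j ∈ I` and `-1` otherwise. -/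
def sgn {n : ℕ} (I : Finset (Fin n)) (j : Fin n) : ℝ := if j ∈ I then 1 else -1

open Finset

/-- number of `p`-subsets of `t` containing a fixed subset `s`. -/
lemma count_superset {α : Type*} [DecidableEq α] (p : ℕ) (s t : Finset α) (hs : s ⊆ t)
    (hc : s.card ≤ p) :
    ((powersetCard p t).filter (fun I => s ⊆ I)).card
      = (t.card - s.card).choose (p - s.card) := by
  rw [show t.card - s.card = (t \ s).card from (card_sdiff_of_subset hs).symm, ← card_powersetCard]
  refine card_bij' (fun I _ => I \ s) (fun J _ => J ∪ s) ?_ ?_ ?_ ?_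
  · intro I hI
    simp only [mem_filter, mem_powersetCard] at hI
    obtain ⟨⟨hIt, hIc⟩, hsI⟩ := hI
    rw [mem_powersetCard]
    exact ⟨sdiff_subset_sdiff hIt (le_refl s), by rw [card_sdiff_of_subset hsI, hIc]⟩
  · intro J hJ
    rw [mem_powersetCard] at hJ
    obtain ⟨hJt, hJc⟩ := hJ
    have hdisj : Disjoint J s := (sdiff_disjoint.mono_left hJt)
    simp only [mem_filter, mem_powersetCard]
    refine ⟨⟨?_, ?_⟩, subset_union_right⟩
    · exact union_subset (hJt.trans sdiff_subset) hs
    · rw [card_union_of_disjoint hdisj, hJc]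
      omega
  · intro I hI
    simp only [mem_filter, mem_powersetCard] at hI
    exact sdiff_union_of_subset hI.2
  · intro J hJ
    rw [mem_powersetCard] at hJ
    have hdisj : Disjoint J s := (sdiff_disjoint.mono_left hJ.1)
    show (J ∪ s) \ s = J
    simp [union_sdiff_distrib, sdiff_eq_self_of_disjoint hdisj]

lemma count_superset_zero {α : Type*} [DecidableEq α] (p : ℕ) (s t : Finset α)
    (hc : p < s.card) :
    ((powersetCard p t).filter (fun I => s ⊆ I)) = ∅ := by
  rw [filter_eq_empty_iff]
  intro I hI
  rw [mem_powersetCard] at hI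
  intro hsI
  have := card_le_card hsI
  omega

lemma sum_sgn (n p : ℕ) (hp : p ≤ n) (i j : Fin n) :
    ∑ I ∈ powersetCard p (Finset.univ : Finset (Fin n)), sgn I i * sgn I j
      = if i = j then (n.choose p : ℝ)
        else (n.choose p : ℝ) - 4 * (C ((n : ℤ) - 2) ((p : ℤ) - 1) : ℝ) := by
  split_ifs with hij
  · subst hij
    have : ∀ I : Finset (Fin n), sgn I i * sgn I i = 1 := by
      intro I; unfold sgn; split_ifs <;> norm_num
    rw [Finset.sum_congr rfl fun I _ => this I, Finset.sum_const, card_powersetCard,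
      card_univ, Fintype.card_fin, nsmul_eq_mul, mul_one]
  · -- off-diagonal case
    have hn2 : 2 ≤ n := by
      have h2 : ({i, j} : Finset (Fin n)).card = 2 := card_pair hij
      have := card_le_card (subset_univ ({i, j} : Finset (Fin n)))
      rw [h2, card_univ, Fintype.card_fin] at this
      exact this
    have hexp : ∀ I : Finset (Fin n), sgn I i * sgn I j
        = 4 * (if ({i, j} : Finset (Fin n)) ⊆ I then (1:ℝ) else 0)
          - 2 * (if ({i} : Finset (Fin n)) ⊆ I then (1:ℝ) else 0)
          - 2 * (if ({j} : Finset (Fin n)) ⊆ I then (1:ℝ) else 0) + 1 := by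
      intro I
      unfold sgn
      simp only [insert_subset_iff, singleton_subset_iff]
      by_cases h1 : i ∈ I <;> by_cases h2 : j ∈ I <;> simp [h1, h2] <;> norm_num
    rw [Finset.sum_congr rfl fun I _ => hexp I]
    simp only [Finset.sum_add_distrib, Finset.sum_sub_distrib, ← Finset.mul_sum,
      Finset.sum_boole, Finset.sum_const, card_powersetCard, card_univ, Fintype.card_fin,
      nsmul_eq_mul, mul_one]
    have hcard2 : ({i, j} : Finset (Fin n)).card = 2 := card_pair hij
    have hcard1i : ({i} : Finset (Fin n)).card = 1 := card_singleton i
    have hcard1j : ({j} : Finset (Fin n)).card = 1 := card_singleton j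
    have huniv : (Finset.univ : Finset (Fin n)).card = n := by
      rw [card_univ, Fintype.card_fin]
    -- count for pairs
    rcases Nat.lt_or_ge p 1 with hp0 | hp1
    · -- p = 0
      interval_cases p
      rw [show ({I ∈ powersetCard 0 (Finset.univ : Finset (Fin n)) | {i, j} ⊆ I}) = ∅ from
          count_superset_zero 0 _ _ (by rw [card_pair hij]; omega)]
      rw [show ({I ∈ powersetCard 0 (Finset.univ : Finset (Fin n)) | {i} ⊆ I}) = ∅ from
          count_superset_zero 0 _ _ (by rw [card_singleton]; omega)]
      rw [show ({I ∈ powersetCard 0 (Finset.univ : Finset (Fin n)) | {j} ⊆ I}) = ∅ from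
          count_superset_zero 0 _ _ (by rw [card_singleton]; omega)]
      have : C ((n : ℤ) - 2) ((0 : ℕ) - 1 : ℤ) = 0 := by
        rw [C, if_neg]; omega
      rw [this]
      simp
    · have hi1 : ({I ∈ powersetCard p (Finset.univ : Finset (Fin n)) | {i} ⊆ I}).card
          = (n - 1).choose (p - 1) := by
        rw [count_superset p _ _ (subset_univ _) (by rw [card_singleton]; omega), hcard1i, huniv]
      have hj1 : ({I ∈ powersetCard p (Finset.univ : Finset (Fin n)) | {j} ⊆ I}).card
          = (n - 1).choose (p - 1) := by
        rw [count_superset p _ _ (subset_univ _) (by rw [card_singleton]; omega), hcard1j, huniv]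
      rw [hi1, hj1]
      rcases Nat.lt_or_ge p 2 with hp2 | hp2
      · -- p = 1
        interval_cases p
        rw [show ({I ∈ powersetCard 1 (Finset.univ : Finset (Fin n)) | {i, j} ⊆ I}) = ∅ from
            count_superset_zero 1 _ _ (by rw [card_pair hij]; omega)]
        have hC : C ((n : ℤ) - 2) ((1 : ℕ) - 1 : ℤ) = 1 := by
          rw [C, if_pos (by omega)]
          norm_num
        rw [hC]
        simp only [card_empty, Nat.cast_zero, mul_zero, Nat.sub_self, Nat.choose_zero_right]
        push_cast [Nat.choose_one_right]
        ring
      · -- 2 ≤ p ≤ n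
        have hij2 : ({I ∈ powersetCard p (Finset.univ : Finset (Fin n)) | {i, j} ⊆ I}).card
            = (n - 2).choose (p - 2) := by
          rw [count_superset p _ _ (subset_univ _) (by rw [card_pair hij]; omega), hcard2, huniv]
        rw [hij2]
        rcases Nat.lt_or_ge p n with hpn | hpn
        · -- 2 ≤ p ≤ n - 1
          have hC : C ((n : ℤ) - 2) ((p : ℤ) - 1) = ((n - 2).choose (p - 1) : ℤ) := by
            have e1 : ((n : ℤ) - 2).toNat = n - 2 := by omega
            have e2 : ((p : ℤ) - 1).toNat = p - 1 := by omega
            rw [C, if_pos (show (0:ℤ) ≤ (p : ℤ) - 1 ∧ (p : ℤ) - 1 ≤ (n : ℤ) - 2 by omega), e1, e2]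
          rw [hC]
          have pascal : (n - 1).choose (p - 1) = (n - 2).choose (p - 2) + (n - 2).choose (p - 1) := by
            have h1 : n - 1 = (n - 2) + 1 := by omega
            have h2 : p - 1 = (p - 2) + 1 := by omega
            rw [h1, h2, Nat.choose_succ_succ]
          rw [pascal]
          push_cast
          ring
        · -- p = n
          have hpn' : p = n := le_antisymm hp hpn
          subst hpn'
          have hC : C ((p : ℤ) - 2) ((p : ℤ) - 1) = 0 := by
            rw [C, if_neg]; omega
          rw [hC]
          simp only [Nat.choose_self, Nat.sub_self, Nat.choose_zero_right, Nat.cast_one]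
          norm_num

theorem stmt14 (n p : ℕ) (hn : 1 ≤ n) (hp : p ≤ n) (d ξ : Fin n → ℝ) :
    ∑ I ∈ Finset.powersetCard p (Finset.univ : Finset (Fin n)),
        (∑ i, sgn I i * ξ i ^ 2) * (∑ j, sgn I j * d j) =
      ((C (n : ℤ) (p : ℤ) : ℝ) - 4 * (C ((n : ℤ) - 2) ((p : ℤ) - 1) : ℝ)) *
          (∑ i, ξ i ^ 2) * (∑ i, d i) +
        4 * (C ((n : ℤ) - 2) ((p : ℤ) - 1) : ℝ) * (∑ i, d i * ξ i ^ 2) := by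
  set Cz : ℝ := (C ((n : ℤ) - 2) ((p : ℤ) - 1) : ℝ) with hCz
  have hCnp : (C (n : ℤ) (p : ℤ) : ℝ) = (n.choose p : ℝ) := by
    have e1 : ((n : ℤ)).toNat = n := by omega
    have e2 : ((p : ℤ)).toNat = p := by omega
    rw [C, if_pos (show (0:ℤ) ≤ (p : ℤ) ∧ (p : ℤ) ≤ (n : ℤ) by omega), e1, e2]
    simp
  calc ∑ I ∈ Finset.powersetCard p (Finset.univ : Finset (Fin n)),
        (∑ i, sgn I i * ξ i ^ 2) * (∑ j, sgn I j * d j)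
      = ∑ i, ∑ j, (ξ i ^ 2 * d j) *
          ∑ I ∈ Finset.powersetCard p (Finset.univ : Finset (Fin n)), sgn I i * sgn I j := by
        simp only [Finset.sum_mul_sum]
        rw [Finset.sum_comm]
        refine Finset.sum_congr rfl fun i _ => ?_
        rw [Finset.sum_comm]
        refine Finset.sum_congr rfl fun j _ => ?_
        rw [Finset.mul_sum]
        refine Finset.sum_congr rfl fun I _ => ?_
        ring
    _ = ∑ i, ∑ j, (ξ i ^ 2 * d j) *
          (if i = j then (n.choose p : ℝ) else (n.choose p : ℝ) - 4 * Cz) := by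
        refine Finset.sum_congr rfl fun i _ => Finset.sum_congr rfl fun j _ => ?_
        rw [sum_sgn n p hp i j]
    _ = ∑ i, ∑ j, ((ξ i ^ 2 * d j) * ((n.choose p : ℝ) - 4 * Cz)
          + (if j = i then (ξ i ^ 2 * d j) * (4 * Cz) else 0)) := by
        refine Finset.sum_congr rfl fun i _ => Finset.sum_congr rfl fun j _ => ?_
        by_cases h : i = j
        · rw [if_pos h, if_pos h.symm]; ring
        · rw [if_neg h, if_neg (Ne.symm h)]; ring
    _ = ((C (n : ℤ) (p : ℤ) : ℝ) - 4 * Cz) * (∑ i, ξ i ^ 2) * (∑ i, d i)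
          + 4 * Cz * (∑ i, d i * ξ i ^ 2) := by
        simp only [Finset.sum_add_distrib, Finset.sum_ite_eq', Finset.mem_univ, if_true]
        rw [hCnp]
        have h1 : ((n.choose p : ℝ) - 4 * Cz) * (∑ i, ξ i ^ 2) * (∑ i, d i)
            = ∑ x : Fin n, ∑ y : Fin n, ξ x ^ 2 * d y * ((n.choose p : ℝ) - 4 * Cz) := by
          rw [mul_assoc, Finset.sum_mul_sum, Finset.mul_sum]
          exact Finset.sum_congr rfl fun x _ => by
            rw [Finset.mul_sum]
            exact Finset.sum_congr rfl fun y _ => by ring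
        have h2 : 4 * Cz * ∑ i, d i * ξ i ^ 2
            = ∑ x : Fin n, ξ x ^ 2 * d x * (4 * Cz) := by
          rw [Finset.mul_sum]
          exact Finset.sum_congr rfl fun x _ => by ring
        rw [h1, h2]
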